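/- For any polynomial f with real coefficients and any subset u ⊆ {1,...,N}, the characteristic polynomial of the submatrix f(A)_{uu} is given by the generalized moments of the joint spectral measure: for all real z, det(zI − f(A)_{uu}) = ∑_{σ∈S_N} ε(σ) (∏_{j=1}^N p_{jσ(j)}) ∏_{i∈u} (z − f(λ_{σ(i)})). In particular, the eigenvalues of f(A)_{uu} are the roots of the polynomial z ↦ ∑_{σ∈S_N} ε(σ) (∏_j p_{jσ(j)}) ∏_{i∈u} (z − f(λ_{σ(i)})). -/

import Mathlib

open Matrix BigOperators Polynomial

lemma conj_pow_aux {N : ℕ} (P D : Matrix (Fin N) (Fin N) ℝ)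
    (horth : P * Pᵀ = 1) (n : ℕ) : (P * D * Pᵀ) ^ n = P * D ^ n * Pᵀ := by
  have h2 : Pᵀ * P = 1 := mul_eq_one_comm.mp horth
  induction n with
  | zero => simp [pow_zero, horth]
  | succ n ih =>
      rw [pow_succ, pow_succ, ih]
      calc P * D ^ n * Pᵀ * (P * D * Pᵀ)
          = P * D ^ n * (Pᵀ * P) * D * Pᵀ := by
            simp only [Matrix.mul_assoc]
        _ = P * (D ^ n * D) * Pᵀ := by
            rw [h2]
            simp only [Matrix.mul_assoc, Matrix.mul_one, Matrix.one_mul]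

lemma aeval_conj_diagonal {N : ℕ} (P : Matrix (Fin N) (Fin N) ℝ) (lam : Fin N → ℝ)
    (horth : P * Pᵀ = 1) (f : Polynomial ℝ) :
    (Polynomial.aeval (P * Matrix.diagonal lam * Pᵀ)) f
      = P * Matrix.diagonal (fun i => f.eval (lam i)) * Pᵀ := by
  induction f using Polynomial.induction_on' with
  | add p q hp hq =>
      simp only [map_add, hp, hq, Polynomial.eval_add]
      have : Matrix.diagonal (fun i => p.eval (lam i) + q.eval (lam i))
          = Matrix.diagonal (fun i => p.eval (lam i)) + Matrix.diagonal (fun i => q.eval (lam i)) := by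
        rw [← Matrix.diagonal_add]
      rw [this, Matrix.mul_add, Matrix.add_mul]
  | monomial n a =>
      rw [Polynomial.aeval_monomial, ← Algebra.smul_def, conj_pow_aux P _ horth]
      have hd : (Matrix.diagonal lam) ^ n = Matrix.diagonal (fun i => lam i ^ n) := by
        exact (Matrix.diagonal_pow lam n)
      have h2 : Matrix.diagonal (fun i => Polynomial.eval (lam i) ((Polynomial.monomial n) a))
          = a • Matrix.diagonal (fun i => lam i ^ n) := by
        have h3 : (fun i => Polynomial.eval (lam i) ((Polynomial.monomial n) a))
            = a • (fun i => lam i ^ n) := by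
          funext i
          simp [mul_comm]
        rw [h3, Matrix.diagonal_smul]
      rw [hd, h2, Matrix.mul_smul, Matrix.smul_mul]

/-- For a real polynomial `f` and a subset `u`, the characteristic polynomial of the
submatrix `f(A)_{uu}` is given by the generalized moments of the joint spectral measure:
`det(zI − f(A)_{uu}) = ∑_σ ε(σ) (∏_j p_{jσ(j)}) ∏_{i∈u} (z − f(λ_{σ(i)}))`. -/
theorem charpoly_fun_submatrix_eq_gen_moment (N : ℕ)
    (A P : Matrix (Fin N) (Fin N) ℝ) (lam : Fin N → ℝ)
    (hsymm : A.IsSymm)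
    (hdecomp : A = P * Matrix.diagonal lam * Pᵀ)
    (horth : P * Pᵀ = 1)
    (hdet : P.det = 1)
    (f : Polynomial ℝ) (u : Finset (Fin N)) (z : ℝ) :
    Matrix.det
        (z • (1 : Matrix {i // i ∈ u} {i // i ∈ u} ℝ) -
          ((Polynomial.aeval A) f).submatrix
            (fun i : {i // i ∈ u} => (i : Fin N)) (fun i : {i // i ∈ u} => (i : Fin N)))
      = ∑ σ : Equiv.Perm (Fin N),
          ((Equiv.Perm.sign σ : ℤ) : ℝ) * (∏ j : Fin N, P j (σ j)) *
            ∏ i ∈ u, (z - f.eval (lam (σ i))) := by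
  set d : Fin N → ℝ := fun i => z - f.eval (lam i) with hd
  set M : Matrix (Fin N) (Fin N) ℝ := P * Matrix.diagonal d * Pᵀ with hM
  -- Step 1 : z • 1 - f(A) = M
  have hPtP : Pᵀ * P = 1 := mul_eq_one_comm.mp horth
  have hzM : z • (1 : Matrix (Fin N) (Fin N) ℝ) - (Polynomial.aeval A) f = M := by
    rw [hdecomp, aeval_conj_diagonal P lam horth, hM]
    have h1 : Matrix.diagonal d
        = Matrix.diagonal (fun _ : Fin N => z) - Matrix.diagonal (fun i => f.eval (lam i)) := by
      rw [← Matrix.diagonal_sub]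
    have h2 : Matrix.diagonal (fun _ : Fin N => z) = z • (1 : Matrix (Fin N) (Fin N) ℝ) := by
      ext i j
      rw [Matrix.smul_apply, Matrix.one_apply, Matrix.diagonal_apply]
      by_cases hij : i = j <;> simp [hij]
    rw [h1, Matrix.mul_sub, Matrix.sub_mul, h2, Matrix.mul_smul, Matrix.smul_mul,
      Matrix.mul_one, horth]
  -- Step 2 : the auxiliary matrices B and K
  set B : Matrix (Fin N) (Fin N) ℝ :=
    Matrix.of (fun m j => P j m * (if j ∈ u then d m else 1)) with hB
  set K : Matrix (Fin N) (Fin N) ℝ := P * B with hK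
  have hMapp : ∀ j k, M j k = ∑ m : Fin N, P j m * d m * P k m := by
    intro j k
    rw [hM, Matrix.mul_apply]
    exact Finset.sum_congr rfl (fun m _ => by
      rw [Matrix.mul_diagonal, Matrix.transpose_apply])
  have hKapp : ∀ j k, K j k
      = if k ∈ u then M j k else (1 : Matrix (Fin N) (Fin N) ℝ) j k := by
    intro j k
    by_cases hk : k ∈ u
    · rw [if_pos hk, hMapp, hK, Matrix.mul_apply]
      exact Finset.sum_congr rfl (fun m _ => by
        simp only [hB, Matrix.of_apply, if_pos hk]; ring)
    · rw [if_neg hk, hK, Matrix.mul_apply, ← horth, Matrix.mul_apply]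
      exact Finset.sum_congr rfl (fun m _ => by
        simp only [hB, Matrix.of_apply, if_neg hk, mul_one, Matrix.transpose_apply])
  -- Step 3 : det K = det of the submatrix
  set e : ({i // i ∈ u} ⊕ {i // i ∉ u}) ≃ Fin N := Equiv.sumCompl (fun i => i ∈ u) with he
  have hKsub : K.submatrix e e
      = Matrix.fromBlocks
          (M.submatrix (fun i : {i // i ∈ u} => (i : Fin N)) (fun i : {i // i ∈ u} => (i : Fin N)))
          0
          (M.submatrix (fun i : {i // i ∉ u} => (i : Fin N)) (fun i : {i // i ∈ u} => (i : Fin N)))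
          1 := by
    ext (i | i) (j | j) <;>
      simp only [Matrix.submatrix_apply, Matrix.fromBlocks_apply₁₁, Matrix.fromBlocks_apply₁₂,
        Matrix.fromBlocks_apply₂₁, Matrix.fromBlocks_apply₂₂, he, Equiv.sumCompl_apply_inl,
        Equiv.sumCompl_apply_inr, hKapp, Matrix.zero_apply]
    · rw [if_pos j.2]
    · rw [if_neg j.2]
      exact Matrix.one_apply_ne (fun h => j.2 (h ▸ i.2))
    · rw [if_pos j.2]
    · rw [if_neg j.2]
      by_cases hij : i = j
      · subst hij; simp [Matrix.one_apply]
      · rw [Matrix.one_apply_ne (fun h => hij (Subtype.ext h)),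
          Matrix.one_apply_ne hij]
  have hdetK : K.det
      = Matrix.det (z • (1 : Matrix {i // i ∈ u} {i // i ∈ u} ℝ) -
          ((Polynomial.aeval A) f).submatrix
            (fun i : {i // i ∈ u} => (i : Fin N)) (fun i : {i // i ∈ u} => (i : Fin N))) := by
    have : z • (1 : Matrix {i // i ∈ u} {i // i ∈ u} ℝ) -
          ((Polynomial.aeval A) f).submatrix
            (fun i : {i // i ∈ u} => (i : Fin N)) (fun i : {i // i ∈ u} => (i : Fin N))
        = M.submatrix (fun i : {i // i ∈ u} => (i : Fin N)) (fun i : {i // i ∈ u} => (i : Fin N)) := by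
      rw [← hzM]
      ext i j
      by_cases hij : i = j
      · subst hij
        simp [Matrix.one_apply, Matrix.submatrix_apply]
      · have : (i : Fin N) ≠ (j : Fin N) := fun h => hij (Subtype.ext h)
        simp [Matrix.one_apply_ne hij, Matrix.one_apply_ne this, Matrix.submatrix_apply]
    rw [this, ← Matrix.det_submatrix_equiv_self e K, hKsub,
      Matrix.det_fromBlocks_zero₁₂, Matrix.det_one, mul_one]
  -- Step 4 : compute det K = det B via Leibniz
  rw [← hdetK, hK, Matrix.det_mul, hdet, one_mul, Matrix.det_apply']
  refine Finset.sum_congr rfl (fun σ _ => ?_)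
  have hprod : ∏ i : Fin N, B (σ i) i
      = (∏ j : Fin N, P j (σ j)) * ∏ i ∈ u, d (σ i) := by
    have h1 : ∏ i : Fin N, B (σ i) i
        = (∏ i : Fin N, P i (σ i)) * ∏ i : Fin N, (if i ∈ u then d (σ i) else 1) := by
      simp only [hB, Matrix.of_apply]
      rw [Finset.prod_mul_distrib]
    rw [h1, Finset.prod_ite_mem Finset.univ u (fun i => d (σ i)), Finset.univ_inter]
  rw [hprod, hd]
  ring
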